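/- arXiv:2308.04011 — 2 statements merged into one kernel-verified Lean document; each statement's English description precedes it below -/
import Mathlib

section
/- Under the assumptions of Lemma 1 with squared loss, ε_PEHE/4 ≤ ε_CF − σ_Y ≤ ε_F^η + B_Φ · IPM_G(p_Φ(r)p(t,z), q_{Φ,η}(r|t,z)p(t,z)) − σ_Y. -/
open MeasureTheory

/-- The integral probability metric over a function class `G`, between densities `p` and `q`
with respect to a base measure `μ`. -/
noncomputable def IPM {X : Type*} [MeasurableSpace X] (μ : Measure X)
    (G : Set (X → ℝ)) (p q : X → ℝ) : ℝ :=
  sSup {r : ℝ | ∃ g ∈ G, r = |∫ x, g x * (p x - q x) ∂μ|}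

private lemma my_integrable_of_integral_eq_one {α : Type*} [MeasurableSpace α] {μ : Measure α}
    {f : α → ℝ} (h : ∫ x, f x ∂μ = 1) : Integrable f μ := by
  by_contra hc
  rw [integral_undef hc] at h
  exact one_ne_zero h.symm

private lemma var_decomp {p : ℝ → ℝ} (hp : ∀ y, 0 ≤ p y) (h1 : ∫ y, p y = 1)
    (hI2 : Integrable (fun y => y ^ 2 * p y)) (c m0 : ℝ) (hm0 : m0 = ∫ y, y * p y) :
    (∫ y, (y - c) ^ 2 * p y) = (∫ y, (m0 - y) ^ 2 * p y) + (c - m0) ^ 2 := by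
  have hpI : Integrable p := my_integrable_of_integral_eq_one h1
  have hpm : AEStronglyMeasurable p volume := hpI.aestronglyMeasurable
  have hyI : Integrable (fun y => y * p y) := by
    refine Integrable.mono' (g := fun y => y ^ 2 * p y + p y) (hI2.add hpI)
      (aestronglyMeasurable_id.mul hpm) (Filter.Eventually.of_forall fun y => ?_)
    have h0 := hp y
    have habs : |y| ≤ y ^ 2 + 1 := by nlinarith [sq_nonneg (|y| - 1), sq_abs y, abs_nonneg y]
    calc ‖y * p y‖ = |y| * p y := by rw [Real.norm_eq_abs, abs_mul, abs_of_nonneg h0]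
      _ ≤ (y ^ 2 + 1) * p y := mul_le_mul_of_nonneg_right habs h0
      _ = y ^ 2 * p y + p y := by ring
  have e1 : ∀ a : ℝ, (∫ y, (y - a) ^ 2 * p y) = (∫ y, y ^ 2 * p y) - 2 * a * m0 + a ^ 2 := by
    intro a
    have heq : (fun y => (y - a) ^ 2 * p y)
        = fun y => (y ^ 2 * p y - 2 * a * (y * p y)) + a ^ 2 * p y := by
      funext y; ring
    rw [heq, integral_add (f := fun y => y ^ 2 * p y - 2 * a * (y * p y))
        (g := fun y => a ^ 2 * p y) (hI2.sub (hyI.const_mul _)) (hpI.const_mul _),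
      integral_sub (f := fun y => y ^ 2 * p y) (g := fun y => 2 * a * (y * p y)) hI2
        (hyI.const_mul _), integral_const_mul, integral_const_mul, h1, hm0]
    ring
  have heq2 : (fun y => (m0 - y) ^ 2 * p y) = fun y => (y - m0) ^ 2 * p y := by
    funext y; ring
  rw [e1 c, heq2, e1 m0]
  ring
/-- Theorem 1 (generalization bound for ITE estimation in network data):
ε_PEHE/4 ≤ ε_CF − σ_Y ≤ ε_F^η + B_Φ · IPM_G(p_Φ(r)p(t,z), q_{Φ,η}(r|t,z)p(t,z)) − σ_Y.
Here `R` is the representation space, `T` the space of treatment pairs `(t,z)`,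
`pr` the (pushforward) feature density, `pt` the treatment-pair density,
`q` the reweighted conditional density, `py` the outcome conditional density,
`h` the hypothesis and `m` the conditional mean outcome. -/
theorem generalization_bound_ITE
    {R T : Type*} [MeasurableSpace R] [MeasurableSpace T]
    (μ : Measure R) (ν : Measure T) [SigmaFinite μ] [SigmaFinite ν]
    (G : Set (R × T → ℝ))
    (py : ℝ → R → T → ℝ) (pr : R → ℝ) (pt : T → ℝ) (q : R → T → ℝ)
    (h m : R → T → ℝ) (B : ℝ) (hB : 0 < B)
    (hpy : ∀ y r t, 0 ≤ py y r t)
    (hpr : ∀ r, 0 ≤ pr r) (hpt : ∀ t, 0 ≤ pt t) (hq : ∀ r t, 0 ≤ q r t)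
    (hpr1 : ∫ r, pr r ∂μ = 1) (hpt1 : ∫ t, pt t ∂ν = 1)
    (hq1 : ∀ t, ∫ r, q r t ∂μ = 1)
    (hnorm : ∀ r t, ∫ y, py y r t = 1)
    (hm : ∀ r t, m r t = ∫ y, y * py y r t)
    (hIntY : ∀ r t, Integrable (fun y : ℝ => y ^ 2 * py y r t))
    (hG : (fun z : R × T => (∫ y, (y - h z.1 z.2) ^ 2 * py y z.1 z.2) / B) ∈ G)
    (hIntCF : Integrable
      (fun z : R × T => (∫ y, (y - h z.1 z.2) ^ 2 * py y z.1 z.2) * (pr z.1 * pt z.2))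
      (μ.prod ν))
    (hIntF : Integrable
      (fun z : R × T => (∫ y, (y - h z.1 z.2) ^ 2 * py y z.1 z.2) * (q z.1 z.2 * pt z.2))
      (μ.prod ν))
    (hBdd : BddAbove {x : ℝ | ∃ g ∈ G,
      x = |∫ z, g z * ((fun z : R × T => pr z.1 * pt z.2) z
            - (fun z : R × T => q z.1 z.2 * pt z.2) z) ∂(μ.prod ν)|}) :
    (∫ t, ∫ t', ∫ r,
        ((h r t - h r t') - (m r t - m r t')) ^ 2 * pr r * pt t * pt t' ∂μ ∂ν ∂ν) / 4
      ≤ (∫ t, ∫ r, (∫ y, (y - h r t) ^ 2 * py y r t) * (pr r * pt t) ∂μ ∂ν)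
          - (∫ t, ∫ r, (∫ y, (m r t - y) ^ 2 * py y r t) * (pr r * pt t) ∂μ ∂ν)
    ∧ (∫ t, ∫ r, (∫ y, (y - h r t) ^ 2 * py y r t) * (pr r * pt t) ∂μ ∂ν)
          - (∫ t, ∫ r, (∫ y, (m r t - y) ^ 2 * py y r t) * (pr r * pt t) ∂μ ∂ν)
      ≤ (∫ t, ∫ r, (∫ y, (y - h r t) ^ 2 * py y r t) * (q r t * pt t) ∂μ ∂ν)
          + B * IPM (μ.prod ν) G (fun z => pr z.1 * pt z.2) (fun z => q z.1 z.2 * pt z.2)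
          - (∫ t, ∫ r, (∫ y, (m r t - y) ^ 2 * py y r t) * (pr r * pt t) ∂μ ∂ν) := by
  classical
  have hAB : ∀ r t, (∫ y, (y - h r t) ^ 2 * py y r t)
      = (∫ y, (m r t - y) ^ 2 * py y r t) + (h r t - m r t) ^ 2 := fun r t =>
    var_decomp (fun y => hpy y r t) (hnorm r t) (hIntY r t) (h r t) (m r t) (hm r t)
  set A : R → T → ℝ := fun r t => ∫ y, (y - h r t) ^ 2 * py y r t with hA_def
  set Bv : R → T → ℝ := fun r t => ∫ y, (m r t - y) ^ 2 * py y r t with hBv_def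
  have hBnn : ∀ r t, 0 ≤ Bv r t := fun r t =>
    integral_nonneg fun y => mul_nonneg (sq_nonneg _) (hpy y r t)
  have hAnn : ∀ r t, 0 ≤ A r t := fun r t =>
    integral_nonneg fun y => mul_nonneg (sq_nonneg _) (hpy y r t)
  have hBA : ∀ r t, Bv r t = A r t - (h r t - m r t) ^ 2 := fun r t => by
    have h1 := hAB r t
    simp only [hA_def, hBv_def]
    linarith
  have hfA : ∀ r t, (h r t - m r t) ^ 2 ≤ A r t := fun r t => by
    have h2 := hBnn r t
    have h3 := hBA r t
    linarith
  have hBleA : ∀ r t, Bv r t ≤ A r t := fun r t => by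
    have := hBA r t
    nlinarith [sq_nonneg (h r t - m r t)]
  set c : T → ℝ := fun t => ∫ r, A r t * (pr r * pt t) ∂μ with hc_def
  set s : T → ℝ := fun t => ∫ r, Bv r t * (pr r * pt t) ∂μ with hs_def
  have hptI : Integrable pt ν := my_integrable_of_integral_eq_one hpt1
  have hIntCF' : Integrable (fun z : R × T => A z.1 z.2 * (pr z.1 * pt z.2)) (μ.prod ν) := hIntCF
  have hIntF' : Integrable (fun z : R × T => A z.1 z.2 * (q z.1 z.2 * pt z.2)) (μ.prod ν) := hIntF
  have hcI : Integrable c ν := hIntCF'.integral_prod_right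
  have hsecA : ∀ᵐ t ∂ν, Integrable (fun r => A r t * (pr r * pt t)) μ := hIntCF'.prod_left_ae
  have hXnn : ∀ r t, 0 ≤ pr r * pt t := fun r t => mul_nonneg (hpr r) (hpt t)
  have snn : ∀ t, 0 ≤ s t := fun t => integral_nonneg fun r =>
    mul_nonneg (hBnn r t) (hXnn r t)
  have hsc : ∀ᵐ t ∂ν, s t ≤ c t := by
    filter_upwards [hsecA] with t ht
    exact integral_mono_of_nonneg
      (Filter.Eventually.of_forall fun r => mul_nonneg (hBnn r t) (hXnn r t)) ht
      (Filter.Eventually.of_forall fun r =>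
        mul_le_mul_of_nonneg_right (hBleA r t) (hXnn r t))
  -- existence of a dominating integrable function computing c t - s t
  have hu : ∀ᵐ t ∂ν, ∃ u : R → ℝ, (∀ r, 0 ≤ u r) ∧
      (∀ r, (h r t - m r t) ^ 2 * (pr r * pt t) ≤ u r) ∧ Integrable u μ ∧
      (∫ r, u r ∂μ) = c t - s t := by
    filter_upwards [hsecA] with t ht
    by_cases hms : AEStronglyMeasurable (fun r => (h r t - m r t) ^ 2 * (pr r * pt t)) μ
    · have hfint : Integrable (fun r => (h r t - m r t) ^ 2 * (pr r * pt t)) μ := by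
        refine ht.mono' hms (Filter.Eventually.of_forall fun r => ?_)
        rw [Real.norm_eq_abs, abs_of_nonneg (mul_nonneg (sq_nonneg _) (hXnn r t))]
        exact mul_le_mul_of_nonneg_right (hfA r t) (hXnn r t)
      have heq : (fun r => Bv r t * (pr r * pt t))
          = fun r => A r t * (pr r * pt t) - (h r t - m r t) ^ 2 * (pr r * pt t) := by
        funext r; rw [hBA r t]; ring
      have hsval : s t = c t - ∫ r, (h r t - m r t) ^ 2 * (pr r * pt t) ∂μ := by
        have : (∫ r, Bv r t * (pr r * pt t) ∂μ)
            = (∫ r, A r t * (pr r * pt t) ∂μ)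
              - ∫ r, (h r t - m r t) ^ 2 * (pr r * pt t) ∂μ := by
          rw [heq, integral_sub (f := fun r => A r t * (pr r * pt t))
            (g := fun r => (h r t - m r t) ^ 2 * (pr r * pt t)) ht hfint]
        exact this
      exact ⟨fun r => (h r t - m r t) ^ 2 * (pr r * pt t),
        fun r => mul_nonneg (sq_nonneg _) (hXnn r t), fun r => le_rfl, hfint,
        by rw [hsval]; ring⟩
    · have hsz : s t = 0 := by
        refine integral_undef fun hint => hms ?_
        have heq2 : (fun r => (h r t - m r t) ^ 2 * (pr r * pt t))
            = fun r => A r t * (pr r * pt t) - Bv r t * (pr r * pt t) := by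
          funext r; rw [hBA r t]; ring
        rw [heq2]
        exact ht.aestronglyMeasurable.sub hint.aestronglyMeasurable
      refine ⟨fun r => A r t * (pr r * pt t),
        fun r => mul_nonneg (hAnn r t) (hXnn r t),
        fun r => mul_le_mul_of_nonneg_right (hfA r t) (hXnn r t), ht, ?_⟩
      rw [hsz, sub_zero]
  have Mnn : ∀ t : T, 0 ≤ ∫ t', ∫ r,
      ((h r t - h r t') - (m r t - m r t')) ^ 2 * pr r * pt t * pt t' ∂μ ∂ν := fun t =>
    integral_nonneg fun t' => integral_nonneg fun r =>
      mul_nonneg (mul_nonneg (mul_nonneg (sq_nonneg _) (hpr r)) (hpt t)) (hpt t')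
  -- the key bound: L ≤ 4 ∫ w for any integrable w dominating c - s a.e.
  have key : ∀ w : T → ℝ, Integrable w ν → (∀ᵐ t ∂ν, c t - s t ≤ w t) →
      (∫ t, ∫ t', ∫ r,
          ((h r t - h r t') - (m r t - m r t')) ^ 2 * pr r * pt t * pt t' ∂μ ∂ν ∂ν)
        ≤ 4 * ∫ t, w t ∂ν := by
    intro w hwI hw
    have hmid : ∀ᵐ t ∂ν, (∫ t', ∫ r,
        ((h r t - h r t') - (m r t - m r t')) ^ 2 * pr r * pt t * pt t' ∂μ ∂ν)
        ≤ 2 * w t + 2 * pt t * ∫ t', w t' ∂ν := by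
      filter_upwards [hu, hw] with t hut hwt
      obtain ⟨u, hu0, hub, huI, huint⟩ := hut
      have hinner : ∀ᵐ t' ∂ν, (∫ r,
          ((h r t - h r t') - (m r t - m r t')) ^ 2 * pr r * pt t * pt t' ∂μ)
          ≤ 2 * pt t' * w t + 2 * pt t * w t' := by
        filter_upwards [hu, hw] with t' hut' hwt'
        obtain ⟨u', hu0', hub', huI', huint'⟩ := hut'
        have hb : ∀ r, ((h r t - h r t') - (m r t - m r t')) ^ 2 * pr r * pt t * pt t'
            ≤ 2 * pt t' * u r + 2 * pt t * u' r := by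
          intro r
          have h1 := hub r
          have h2 := hub' r
          have h3 : 0 ≤ pr r * pt t * pt t' * ((h r t - m r t) + (h r t' - m r t')) ^ 2 :=
            mul_nonneg (mul_nonneg (hXnn r t) (hpt t')) (sq_nonneg _)
          nlinarith [hpt t, hpt t']
        calc (∫ r, ((h r t - h r t') - (m r t - m r t')) ^ 2 * pr r * pt t * pt t' ∂μ)
            ≤ ∫ r, (2 * pt t' * u r + 2 * pt t * u' r) ∂μ :=
              integral_mono_of_nonneg
                (Filter.Eventually.of_forall fun r =>
                  mul_nonneg (mul_nonneg (mul_nonneg (sq_nonneg _) (hpr r)) (hpt t)) (hpt t'))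
                ((huI.const_mul _).add (huI'.const_mul _))
                (Filter.Eventually.of_forall hb)
          _ = 2 * pt t' * (c t - s t) + 2 * pt t * (c t' - s t') := by
              rw [integral_add (f := fun r => 2 * pt t' * u r) (g := fun r => 2 * pt t * u' r)
                (huI.const_mul _) (huI'.const_mul _), integral_const_mul, integral_const_mul,
                huint, huint']
          _ ≤ 2 * pt t' * w t + 2 * pt t * w t' := by
              have e1 : 2 * pt t' * (c t - s t) ≤ 2 * pt t' * w t :=
                mul_le_mul_of_nonneg_left hwt (by linarith [hpt t'])
              have e2 : 2 * pt t * (c t' - s t') ≤ 2 * pt t * w t' :=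
                mul_le_mul_of_nonneg_left hwt' (by linarith [hpt t])
              linarith
      have i1 : (∫ t', 2 * pt t' * w t ∂ν) = 2 * w t := by
        rw [integral_mul_const, integral_const_mul, hpt1]; ring
      have i2 : (∫ t', 2 * pt t * w t' ∂ν) = 2 * pt t * ∫ t', w t' ∂ν :=
        integral_const_mul _ _
      calc (∫ t', ∫ r,
            ((h r t - h r t') - (m r t - m r t')) ^ 2 * pr r * pt t * pt t' ∂μ ∂ν)
          ≤ ∫ t', (2 * pt t' * w t + 2 * pt t * w t') ∂ν :=
            integral_mono_of_nonneg
              (Filter.Eventually.of_forall fun t' => integral_nonneg fun r =>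
                mul_nonneg (mul_nonneg (mul_nonneg (sq_nonneg _) (hpr r)) (hpt t)) (hpt t'))
              (((hptI.const_mul 2).mul_const (w t)).add (hwI.const_mul (2 * pt t))) hinner
        _ = 2 * w t + 2 * pt t * ∫ t', w t' ∂ν := by
            rw [integral_add (f := fun t' => 2 * pt t' * w t) (g := fun t' => 2 * pt t * w t')
              (((hptI.const_mul 2).mul_const (w t))) (hwI.const_mul (2 * pt t)), i1, i2]
    calc (∫ t, ∫ t', ∫ r,
          ((h r t - h r t') - (m r t - m r t')) ^ 2 * pr r * pt t * pt t' ∂μ ∂ν ∂ν)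
        ≤ ∫ t, (2 * w t + 2 * pt t * ∫ t', w t' ∂ν) ∂ν :=
          integral_mono_of_nonneg (Filter.Eventually.of_forall Mnn)
            ((hwI.const_mul 2).add ((hptI.const_mul 2).mul_const _)) hmid
      _ = 4 * ∫ t, w t ∂ν := by
          rw [integral_add (f := fun t => 2 * w t)
            (g := fun t => 2 * pt t * ∫ t', w t' ∂ν)
            (hwI.const_mul 2) ((hptI.const_mul 2).mul_const _), integral_const_mul,
            integral_mul_const, integral_const_mul, hpt1]
          ring
  constructor
  · -- Part 1
    show (∫ t, ∫ t', ∫ r,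
        ((h r t - h r t') - (m r t - m r t')) ^ 2 * pr r * pt t * pt t' ∂μ ∂ν ∂ν) / 4
      ≤ (∫ t, c t ∂ν) - ∫ t, s t ∂ν
    by_cases hsm : AEStronglyMeasurable s ν
    · have hsI : Integrable s ν := by
        refine hcI.mono' hsm ?_
        filter_upwards [hsc] with t ht
        rw [Real.norm_eq_abs, abs_of_nonneg (snn t)]; exact ht
      have hk := key (fun t => c t - s t) (hcI.sub hsI)
        (Filter.Eventually.of_forall fun t => le_rfl)
      rw [integral_sub hcI hsI] at hk
      linarith
    · have hS : (∫ t, s t ∂ν) = 0 :=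
        integral_undef fun hint => hsm hint.aestronglyMeasurable
      have hk := key c hcI (Filter.Eventually.of_forall fun t => sub_le_self _ (snn t))
      rw [hS, sub_zero]
      linarith
  · -- Part 2
    show (∫ t, c t ∂ν) - (∫ t, s t ∂ν)
      ≤ (∫ t, ∫ r, A r t * (q r t * pt t) ∂μ ∂ν)
          + B * IPM (μ.prod ν) G (fun z => pr z.1 * pt z.2) (fun z => q z.1 z.2 * pt z.2)
          - ∫ t, s t ∂ν
    have hfub1 : (∫ t, ∫ r, A r t * (pr r * pt t) ∂μ ∂ν)
        = ∫ z, A z.1 z.2 * (pr z.1 * pt z.2) ∂(μ.prod ν) := by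
      rw [integral_integral_swap (f := fun t r => A r t * (pr r * pt t)) hIntCF'.swap]
      exact integral_integral (f := fun r t => A r t * (pr r * pt t)) hIntCF'
    have hfub2 : (∫ t, ∫ r, A r t * (q r t * pt t) ∂μ ∂ν)
        = ∫ z, A z.1 z.2 * (q z.1 z.2 * pt z.2) ∂(μ.prod ν) := by
      rw [integral_integral_swap (f := fun t r => A r t * (q r t * pt t)) hIntF'.swap]
      exact integral_integral (f := fun r t => A r t * (q r t * pt t)) hIntF'
    have hd : (∫ z, A z.1 z.2 * (pr z.1 * pt z.2) ∂(μ.prod ν))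
        - (∫ z, A z.1 z.2 * (q z.1 z.2 * pt z.2) ∂(μ.prod ν))
        = (∫ z, (A z.1 z.2 / B) * ((pr z.1 * pt z.2) - (q z.1 z.2 * pt z.2)) ∂(μ.prod ν)) * B := by
      rw [← integral_sub hIntCF' hIntF', ← integral_mul_const]
      congr 1
      funext z
      field_simp
    have hmem : |∫ z, (A z.1 z.2 / B) * ((pr z.1 * pt z.2) - (q z.1 z.2 * pt z.2)) ∂(μ.prod ν)|
        ≤ IPM (μ.prod ν) G (fun z => pr z.1 * pt z.2) (fun z => q z.1 z.2 * pt z.2) := by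
      unfold IPM
      exact le_csSup hBdd ⟨_, hG, rfl⟩
    have h2 : (∫ z, (A z.1 z.2 / B) * ((pr z.1 * pt z.2) - (q z.1 z.2 * pt z.2)) ∂(μ.prod ν)) * B
        ≤ |∫ z, (A z.1 z.2 / B) * ((pr z.1 * pt z.2) - (q z.1 z.2 * pt z.2)) ∂(μ.prod ν)| * B :=
      mul_le_mul_of_nonneg_right (le_abs_self _) hB.le
    have h3 : |∫ z, (A z.1 z.2 / B) * ((pr z.1 * pt z.2) - (q z.1 z.2 * pt z.2)) ∂(μ.prod ν)| * B
        ≤ IPM (μ.prod ν) G (fun z => pr z.1 * pt z.2) (fun z => q z.1 z.2 * pt z.2) * B :=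
      mul_le_mul_of_nonneg_right hmem hB.le
    have hmc : B * IPM (μ.prod ν) G (fun z => pr z.1 * pt z.2) (fun z => q z.1 z.2 * pt z.2)
        = IPM (μ.prod ν) G (fun z => pr z.1 * pt z.2) (fun z => q z.1 z.2 * pt z.2) * B :=
      mul_comm _ _
    rw [hmc]
    have hfc : (∫ t, c t ∂ν) = ∫ z, A z.1 z.2 * (pr z.1 * pt z.2) ∂(μ.prod ν) := hfub1
    linarith [hd, h2, h3, hfub2.le, hfub2.ge]
end

section
/- Under the bounded odds-ratio assumption 1/Γ_t ≤ e_η(t;x_t)/e(t;x_t) ≤ Γ_t and 1/Γ_z ≤ φ_η(z;x_z)/φ(z;x_z) ≤ Γ_z with Γ_t, Γ_z ≥ 1, the KL divergence between the product distribution p(x)p(t,z) and the reweighted joint distribution q_η(x|t,z)p(t,z), where q_η(x|t,z) = (1/Z)·p(x)·e(t;x_t)φ(z;x_z)/(e_η(t;x_t)φ_η(z;x_z)), satisfies D_KL(p(x)p(t,z) ∥ q_η(x|t,z)p(t,z)) ≤ 2(log Γ_t + log Γ_z). -/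
open MeasureTheory

/-- KL bound under the bounded odds-ratio assumption:
D_KL(p(x)p(t,z) ∥ q_η(x|t,z)p(t,z)) ≤ 2(log Γ_t + log Γ_z), where
`q_η(x|t,z) = (1/Z(t,z))·p(x)·e(t;x)φ(z;x)/(e_η(t;x)φ_η(z;x))`. Here `T` denotes the
space of treatment pairs `(t,z)`, and `e t x, φ t x, eη t x, φη t x` the true and
estimated individual/neighborhood propensity scores. -/
theorem kl_bound_reweighted
    {X T : Type*} [MeasurableSpace X] [MeasurableSpace T]
    (μ : Measure X) (ν : Measure T)
    (p : X → ℝ) (pt : T → ℝ) (e φ eη φη : T → X → ℝ) (q : X → T → ℝ) (Z : T → ℝ)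
    (Γt Γz : ℝ) (hΓt : 1 ≤ Γt) (hΓz : 1 ≤ Γz)
    (hp : ∀ x, 0 ≤ p x) (hp1 : ∫ x, p x ∂μ = 1)
    (hpt : ∀ t, 0 ≤ pt t) (hpt1 : ∫ t, pt t ∂ν = 1)
    (he : ∀ t x, 0 < e t x) (hφ : ∀ t x, 0 < φ t x)
    (heη : ∀ t x, 0 < eη t x) (hφη : ∀ t x, 0 < φη t x)
    (hodds_t : ∀ t x, 1 / Γt ≤ eη t x / e t x ∧ eη t x / e t x ≤ Γt)
    (hodds_z : ∀ t x, 1 / Γz ≤ φη t x / φ t x ∧ φη t x / φ t x ≤ Γz)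
    (hZ : ∀ t, Z t = ∫ x, p x * (eη t x * φη t x) / (e t x * φ t x) ∂μ)
    (hq : ∀ x t, q x t = (1 / Z t) * p x * (e t x * φ t x) / (eη t x * φη t x)) :
    (∫ t, ∫ x, p x * pt t * Real.log ((p x * pt t) / (q x t * pt t)) ∂μ ∂ν)
      ≤ 2 * (Real.log Γt + Real.log Γz) := by
  have hΓt0 : (0:ℝ) < Γt := lt_of_lt_of_le one_pos hΓt
  have hΓz0 : (0:ℝ) < Γz := lt_of_lt_of_le one_pos hΓz
  set C : ℝ := 2 * (Real.log Γt + Real.log Γz) with hC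
  have hC0 : 0 ≤ C := by
    have := Real.log_nonneg hΓt
    have := Real.log_nonneg hΓz
    positivity
  -- integrability of p and pt
  have hpInt : Integrable p μ := by
    by_contra h
    rw [integral_undef h] at hp1; exact one_ne_zero hp1.symm
  have hptInt : Integrable pt ν := by
    by_contra h
    rw [integral_undef h] at hpt1; exact one_ne_zero hpt1.symm
  -- ratio bound
  have hr : ∀ t x, eη t x * φη t x / (e t x * φ t x) ≤ Γt * Γz := by
    intro t x
    have h1 := (hodds_t t x).2
    have h2 := (hodds_z t x).2
    have hpos : 0 ≤ φη t x / φ t x := le_of_lt (div_pos (hφη t x) (hφ t x))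
    calc eη t x * φη t x / (e t x * φ t x)
        = (eη t x / e t x) * (φη t x / φ t x) := by
          field_simp
      _ ≤ Γt * Γz := mul_le_mul h1 h2 hpos (le_of_lt hΓt0)
  -- Z is nonneg and bounded above
  have hZ0 : ∀ t, 0 ≤ Z t := by
    intro t
    rw [hZ t]
    apply integral_nonneg
    intro x
    exact div_nonneg (mul_nonneg (hp x) (le_of_lt (mul_pos (heη t x) (hφη t x))))
      (le_of_lt (mul_pos (he t x) (hφ t x)))
  have hZub : ∀ t, Z t ≤ Γt * Γz := by
    intro t
    rw [hZ t]
    have hgi : Integrable (fun x => p x * (Γt * Γz)) μ := hpInt.mul_const _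
    have hle : (fun x => p x * (eη t x * φη t x) / (e t x * φ t x))
        ≤ᵐ[μ] fun x => p x * (Γt * Γz) := by
      filter_upwards with x
      rw [mul_div_assoc]
      exact mul_le_mul_of_nonneg_left (hr t x) (hp x)
    have hnn : (0:X → ℝ) ≤ᵐ[μ] fun x => p x * (eη t x * φη t x) / (e t x * φ t x) := by
      filter_upwards with x
      exact div_nonneg (mul_nonneg (hp x) (le_of_lt (mul_pos (heη t x) (hφη t x))))
        (le_of_lt (mul_pos (he t x) (hφ t x)))
    calc ∫ x, p x * (eη t x * φη t x) / (e t x * φ t x) ∂μ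
        ≤ ∫ x, p x * (Γt * Γz) ∂μ := integral_mono_of_nonneg hnn hgi hle
      _ = Γt * Γz := by rw [integral_mul_const, hp1, one_mul]
  -- pointwise log bound
  have hlog : ∀ x t, p x * pt t * Real.log ((p x * pt t) / (q x t * pt t))
      ≤ p x * pt t * C := by
    intro x t
    rcases eq_or_lt_of_le (hp x) with hpx | hpx
    · simp [← hpx]
    rcases eq_or_lt_of_le (hpt t) with hptt | hptt
    · simp [← hptt]
    have hppt : 0 < p x * pt t := mul_pos hpx hptt
    apply mul_le_mul_of_nonneg_left _ (le_of_lt hppt)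
    rcases eq_or_lt_of_le (hZ0 t) with hZt | hZt
    · -- Z t = 0 : q = 0, ratio has zero denominator, log 0 = 0
      have : q x t = 0 := by rw [hq, ← hZt]; simp
      rw [this]
      simpa using hC0
    · have hZne : Z t ≠ 0 := ne_of_gt hZt
      have hratio : (p x * pt t) / (q x t * pt t)
          = Z t * (eη t x * φη t x / (e t x * φ t x)) := by
        rw [hq]
        have h1 := ne_of_gt (he t x); have h2 := ne_of_gt (hφ t x)
        have h3 := ne_of_gt (heη t x); have h4 := ne_of_gt (hφη t x)
        have h5 := ne_of_gt hpx; have h6 := ne_of_gt hptt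
        field_simp
      rw [hratio]
      have hargpos : 0 < Z t * (eη t x * φη t x / (e t x * φ t x)) :=
        mul_pos hZt (div_pos (mul_pos (heη t x) (hφη t x)) (mul_pos (he t x) (hφ t x)))
      have hrr : 0 ≤ eη t x * φη t x / (e t x * φ t x) := le_of_lt (div_pos (mul_pos (heη t x) (hφη t x)) (mul_pos (he t x) (hφ t x)))
      have harg : Z t * (eη t x * φη t x / (e t x * φ t x)) ≤ (Γt * Γz) * (Γt * Γz) :=
        mul_le_mul (hZub t) (hr t x) hrr (le_of_lt (mul_pos hΓt0 hΓz0))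
      calc Real.log (Z t * (eη t x * φη t x / (e t x * φ t x)))
          ≤ Real.log ((Γt * Γz) * (Γt * Γz)) := Real.log_le_log hargpos harg
        _ = C := by
            rw [Real.log_mul (by positivity) (by positivity),
              Real.log_mul (ne_of_gt hΓt0) (ne_of_gt hΓz0)]
            ring
  -- inner integral bound
  have hinner : ∀ t, (∫ x, p x * pt t * Real.log ((p x * pt t) / (q x t * pt t)) ∂μ)
      ≤ pt t * C := by
    intro t
    have hgi : Integrable (fun x => p x * (pt t * C)) μ := hpInt.mul_const _
    have hle : ∀ x, p x * pt t * Real.log ((p x * pt t) / (q x t * pt t))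
        ≤ p x * (pt t * C) := by
      intro x
      have := hlog x t
      linarith [this]
    by_cases hfi : Integrable
        (fun x => p x * pt t * Real.log ((p x * pt t) / (q x t * pt t))) μ
    · calc (∫ x, p x * pt t * Real.log ((p x * pt t) / (q x t * pt t)) ∂μ)
          ≤ ∫ x, p x * (pt t * C) ∂μ := integral_mono hfi hgi hle
        _ = pt t * C := by rw [integral_mul_const, hp1, one_mul]
    · rw [integral_undef hfi]
      exact mul_nonneg (hpt t) hC0
  -- outer integral bound
  by_cases hFi : Integrable
      (fun t => ∫ x, p x * pt t * Real.log ((p x * pt t) / (q x t * pt t)) ∂μ) ν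
  · have hgi : Integrable (fun t => pt t * C) ν := hptInt.mul_const _
    calc (∫ t, ∫ x, p x * pt t * Real.log ((p x * pt t) / (q x t * pt t)) ∂μ ∂ν)
        ≤ ∫ t, pt t * C ∂ν := integral_mono hFi hgi hinner
      _ = C := by rw [integral_mul_const, hpt1, one_mul]
  · rw [integral_undef hFi]
    exact hC0
end
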